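/- (Cyclic sum formula for qMZSVs, depth 1) For 0 < q < 1 and an integer k ≥ 2, Σ_{j=0}^{k-2} ζ_q^⋆(k-j, j+1) = k·ζ_q(k+1) + (k-1)(1-q)·Σ_{m≥1} q^{(k-1)m}/[m]^k. -/

import Mathlib

open scoped BigOperators
open Filter Topology

/-- The q-integer [m] = (1-q^m)/(1-q). -/
noncomputable def qint (q : ℝ) (m : ℕ) : ℝ := (1 - q ^ m) / (1 - q)

section aux
variable {q : ℝ} (hq0 : 0 < q) (hq1 : q < 1)

lemma qint_mul (h : q < 1) (m : ℕ) : (1 - q) * qint q m = 1 - q ^ m := by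
  rw [qint, mul_div_cancel₀]
  exact sub_ne_zero.2 (ne_of_gt (by linarith))

lemma qint_add (h : q < 1) (a b : ℕ) :
    qint q (a + b) = qint q a + q ^ a * qint q b := by
  have h1 : (1:ℝ) - q ≠ 0 := sub_ne_zero.2 (ne_of_gt (by linarith))
  rw [qint, qint, qint, mul_div_assoc', ← add_div]
  congr 1
  rw [pow_add]; ring

include hq0 hq1 in
lemma one_le_qint {m : ℕ} (hm : 1 ≤ m) : 1 ≤ qint q m := by
  rw [qint, le_div_iff₀ (by linarith)]
  have h : q ^ m ≤ q ^ 1 := pow_le_pow_of_le_one hq0.le hq1.le hm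
  simp only [pow_one] at h
  linarith

include hq0 hq1 in
lemma qint_pos {m : ℕ} (hm : 1 ≤ m) : 0 < qint q m :=
  lt_of_lt_of_le one_pos (one_le_qint hq0 hq1 hm)

include hq0 hq1 in
lemma qint_nonneg (m : ℕ) : 0 ≤ qint q m := by
  rw [qint]
  apply div_nonneg _ (by linarith)
  have : q ^ m ≤ 1 := pow_le_one₀ hq0.le hq1.le
  linarith

include hq0 hq1 in
lemma qint_mono {a b : ℕ} (h : a ≤ b) : qint q a ≤ qint q b := by
  obtain ⟨c, rfl⟩ := Nat.exists_eq_add_of_le h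
  rw [qint_add hq1]
  have := mul_nonneg (pow_nonneg hq0.le a) (qint_nonneg hq0 hq1 c)
  linarith

include hq0 hq1 in
lemma one_div_qint_sub {m : ℕ} (hm : 1 ≤ m) :
    1 / qint q m - (1 - q) = q ^ m / qint q m := by
  have hp := qint_pos hq0 hq1 hm
  rw [div_sub' (ne_of_gt hp)]
  congr 1
  have := qint_mul hq1 m
  linarith

include hq0 hq1 in
lemma sub_one_q_le_inv_qint {m : ℕ} (hm : 1 ≤ m) : 1 - q ≤ 1 / qint q m := by
  have hp := qint_pos hq0 hq1 hm
  rw [le_div_iff₀ hp, qint_mul hq1]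
  have : 0 ≤ q ^ m := pow_nonneg hq0.le m
  linarith

end aux

lemma geom_key (x y t : ℝ) (hx : x ≠ 0) (hy : y ≠ 0) (hz : y + t * x ≠ 0)
    {k : ℕ} (hk : 2 ≤ k) :
    ∑ j ∈ Finset.range (k - 1), t ^ (k - 1 - j) / ((y + t * x) ^ (k - j) * x ^ (j + 1)) =
      t / ((y + t * x) * x ^ (k - 1) * y) - t ^ k / ((y + t * x) ^ k * y) := by
  induction k, hk using Nat.le_induction with
  | base =>
    rw [show (2:ℕ) - 1 = 1 from rfl, Finset.sum_range_one]
    norm_num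
    field_simp
    ring
  | succ k hk ih =>
    obtain ⟨K, rfl⟩ : ∃ K, k = K + 1 := ⟨k - 1, by omega⟩
    have hK : 1 ≤ K := by omega
    rw [show K + 1 + 1 - 1 = K + 1 from rfl, Finset.sum_range_succ]
    have hstep : ∀ j ∈ Finset.range K,
        t ^ (K + 1 - j) / ((y + t * x) ^ (K + 1 + 1 - j) * x ^ (j + 1)) =
        (t / (y + t * x)) * (t ^ (K - j) / ((y + t * x) ^ (K + 1 - j) * x ^ (j + 1))) := by
      intro j hj
      rw [Finset.mem_range] at hj
      simp only [show K + 1 + 1 - j = ((K - j) + 1) + 1 from by omega,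
          show K + 1 - j = (K - j) + 1 from by omega, pow_succ]
      have h1 : (y + t * x) ^ (K - j) ≠ 0 := pow_ne_zero _ hz
      have h2 : x ^ j ≠ 0 := pow_ne_zero _ hx
      field_simp
    rw [Finset.sum_congr rfl hstep, ← Finset.mul_sum]
    rw [show K + 1 - 1 = K from rfl] at ih
    rw [ih]
    rw [show K + 1 - K = 1 from by omega, show K + 1 + 1 - K = 2 from by omega]
    have h1 : (y + t * x) ≠ 0 := hz
    have h2 : x ^ K ≠ 0 := pow_ne_zero _ hx
    field_simp
    ring

section pairsec
variable {q : ℝ} (hq0 : 0 < q) (hq1 : q < 1)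

include hq0 hq1 in
lemma pair_lemma {k : ℕ} (hk : 2 ≤ k) (n d : ℕ) (hn : 1 ≤ n) (hd : 1 ≤ d) :
    ∑ j ∈ Finset.range (k - 1),
        q ^ ((k - j - 1) * (n + d) + j * n) / (qint q (n + d) ^ (k - j) * qint q n ^ (j + 1)) =
      q ^ ((k - 1) * n) / qint q n ^ k * (1 / qint q d - 1 / qint q (n + d)) -
        q ^ ((k - 1) * (n + d) + d) / (qint q (n + d) ^ k * qint q d) := by
  have hx : qint q n ≠ 0 := ne_of_gt (qint_pos hq0 hq1 hn)
  have hy : qint q d ≠ 0 := ne_of_gt (qint_pos hq0 hq1 hd)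
  have hznd : qint q (n + d) = qint q d + q ^ d * qint q n := by
    rw [show n + d = d + n from by omega, qint_add hq1]
  have hz : qint q d + q ^ d * qint q n ≠ 0 := by
    rw [← hznd]; exact ne_of_gt (qint_pos hq0 hq1 (by omega))
  have hstep : ∀ j ∈ Finset.range (k - 1),
      q ^ ((k - j - 1) * (n + d) + j * n) / (qint q (n + d) ^ (k - j) * qint q n ^ (j + 1)) =
      q ^ ((k - 1) * n) * ((q ^ d) ^ (k - 1 - j) /
        ((qint q d + q ^ d * qint q n) ^ (k - j) * qint q n ^ (j + 1))) := by
    intro j hj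
    rw [Finset.mem_range] at hj
    have e1 : (k - j - 1) * (n + d) + j * n = (k - 1) * n + d * (k - 1 - j) := by
      have h : k - 1 - j + j = k - 1 := by omega
      calc (k - j - 1) * (n + d) + j * n
          = (k - 1 - j) * (n + d) + j * n := by rw [show k - j - 1 = k - 1 - j from by omega]
        _ = ((k - 1 - j) + j) * n + d * (k - 1 - j) := by ring
        _ = (k - 1) * n + d * (k - 1 - j) := by rw [h]
    rw [e1, pow_add, hznd, mul_div_assoc]
    congr 2
    rw [pow_mul]
  rw [Finset.sum_congr rfl hstep, ← Finset.mul_sum,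
      geom_key (qint q n) (qint q d) (q ^ d) hx hy hz hk, hznd]
  obtain ⟨K, rfl⟩ : ∃ K, k = K + 1 := ⟨k - 1, by omega⟩
  rw [show K + 1 - 1 = K from rfl,
      show (q:ℝ) ^ (K * (n + d) + d) = q ^ (K * n) * ((q ^ d) ^ K * q ^ d) from by
        rw [show K * (n + d) + d = K * n + (d * K + d) from by ring, pow_add, pow_add]
        congr 2
        rw [pow_mul]]
  have h1 : (qint q d + q ^ d * qint q n) ≠ 0 := hz
  have h2 : qint q n ^ K ≠ 0 := pow_ne_zero _ hx
  field_simp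
  ring

omit hq0 hq1 in
lemma diag_lemma {k : ℕ} (hk : 2 ≤ k) (n : ℕ) :
    ∑ j ∈ Finset.range (k - 1),
        q ^ ((k - j - 1) * n + j * n) / (qint q n ^ (k - j) * qint q n ^ (j + 1)) =
      ((k : ℝ) - 1) * (q ^ ((k - 1) * n) / qint q n ^ (k + 1)) := by
  have hstep : ∀ j ∈ Finset.range (k - 1),
      q ^ ((k - j - 1) * n + j * n) / (qint q n ^ (k - j) * qint q n ^ (j + 1)) =
      q ^ ((k - 1) * n) / qint q n ^ (k + 1) := by
    intro j hj
    rw [Finset.mem_range] at hj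
    rw [show (k - j - 1) * n + j * n = (k - 1) * n from by
          rw [show (k - j - 1) * n + j * n = ((k - j - 1) + j) * n from by ring,
              show (k - j - 1) + j = k - 1 from by omega],
        ← pow_add, show k - j + (j + 1) = k + 1 from by omega]
  rw [Finset.sum_congr rfl hstep, Finset.sum_const, Finset.card_range, nsmul_eq_mul]
  congr 1
  have : ((k - 1 : ℕ) : ℝ) = (k : ℝ) - 1 := by
    rw [Nat.cast_sub (by omega)]; norm_num
  rw [this]

end pairsec

noncomputable def Ufun (q : ℝ) (n : ℕ) : ℝ :=
  ∑ i ∈ Finset.range n, (1 / qint q (i + 1) - (1 - q))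

section telesec
variable {q : ℝ} (hq0 : 0 < q) (hq1 : q < 1)

include hq0 hq1 in
lemma qint_lim : Tendsto (fun m : ℕ => 1 / qint q (m + 1)) atTop (𝓝 (1 - q)) := by
  have hform : ∀ m : ℕ, 1 / qint q (m + 1) = (1 - q) / (1 - q ^ (m + 1)) := by
    intro m; rw [qint, one_div_div]
  have hpow : Tendsto (fun m : ℕ => q ^ (m + 1)) atTop (𝓝 0) :=
    (tendsto_pow_atTop_nhds_zero_of_lt_one hq0.le hq1).comp (tendsto_add_atTop_nat 1)
  have h2 : Tendsto (fun m : ℕ => 1 - q ^ (m + 1)) atTop (𝓝 1) := by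
    simpa using tendsto_const_nhds.sub hpow
  have h3 : Tendsto (fun m : ℕ => (1 - q) / (1 - q ^ (m + 1))) atTop (𝓝 ((1 - q) / 1)) :=
    tendsto_const_nhds.div h2 one_ne_zero
  rw [div_one] at h3
  exact h3.congr fun m => (hform m).symm

include hq0 hq1 in
lemma summable_geo_succ : Summable (fun a : ℕ => q ^ (a + 1)) := by
  simpa [pow_succ] using (summable_geometric_of_lt_one hq0.le hq1).mul_right q

include hq0 hq1 in
lemma tele (n : ℕ) :
    HasSum (fun a : ℕ => 1 / qint q (a + 1) - 1 / qint q (n + a + 1)) (Ufun q n) := by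
  set g : ℕ → ℝ := fun m => 1 / qint q (m + 1) with hg
  have hnn : ∀ a : ℕ, 0 ≤ 1 / qint q (a + 1) - 1 / qint q (n + a + 1) := by
    intro a
    have h1 : 0 < qint q (a + 1) := qint_pos hq0 hq1 (by omega)
    have h2 : qint q (a + 1) ≤ qint q (n + a + 1) := qint_mono hq0 hq1 (by omega)
    have := one_div_le_one_div_of_le h1 h2
    linarith
  have hbd : ∀ a : ℕ, 1 / qint q (a + 1) - 1 / qint q (n + a + 1) ≤ q ^ (a + 1) := by
    intro a
    have h1 : 1 - q ≤ 1 / qint q (n + a + 1) := sub_one_q_le_inv_qint hq0 hq1 (by omega)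
    have h2 : 1 / qint q (a + 1) - (1 - q) = q ^ (a + 1) / qint q (a + 1) :=
      one_div_qint_sub hq0 hq1 (by omega)
    have h3 : q ^ (a + 1) / qint q (a + 1) ≤ q ^ (a + 1) :=
      div_le_self (pow_nonneg hq0.le _) (one_le_qint hq0 hq1 (by omega))
    linarith
  rw [hasSum_iff_tendsto_nat_of_nonneg hnn]
  have key : ∀ D : ℕ,
      ∑ a ∈ Finset.range D, (1 / qint q (a + 1) - 1 / qint q (n + a + 1)) =
      ∑ i ∈ Finset.range n, (g i - g (D + i)) := by
    intro D
    induction D with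
    | zero => simp
    | succ D ih =>
      rw [Finset.sum_range_succ, ih]
      have tel : ∑ i ∈ Finset.range n, (g (D + i) - g (D + (i + 1))) = g (D + 0) - g (D + n) :=
        Finset.sum_range_sub' (fun i => g (D + i)) n
      have h2 : ∑ i ∈ Finset.range n, ((g i - g (D + i)) - (g i - g (D + 1 + i))) =
          -(g (D + 0) - g (D + n)) := by
        rw [← tel, ← Finset.sum_neg_distrib]
        apply Finset.sum_congr rfl
        intro i _
        rw [show D + 1 + i = D + (i + 1) from by omega]
        ring
      rw [Finset.sum_sub_distrib] at h2
      have hterm : 1 / qint q (D + 1) - 1 / qint q (n + D + 1) = g D - g (D + n) := by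
        rw [hg, show n + D + 1 = D + n + 1 from by omega]
      rw [hterm]
      have : g (D + 0) = g D := by norm_num
      linarith [h2]
  have hlim : Tendsto (fun D : ℕ => ∑ i ∈ Finset.range n, (g i - g (D + i))) atTop
      (𝓝 (Ufun q n)) := by
    simp only [Ufun]
    apply tendsto_finset_sum
    intro i _
    exact tendsto_const_nhds.sub ((qint_lim hq0 hq1).comp (tendsto_add_atTop_nat i))
  exact hlim.congr fun D => (key D).symm

include hq0 hq1 in
lemma summable_bound {f : ℕ → ℝ} (C : ℝ) (h0 : ∀ n, 0 ≤ f n) (hle : ∀ n, f n ≤ C * q ^ n) :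
    Summable f :=
  Summable.of_nonneg_of_le h0 hle ((summable_geometric_of_lt_one hq0.le hq1).mul_left C)

include hq0 hq1 in
lemma summable_bound2 {f : ℕ × ℕ → ℝ} (C : ℝ) (h0 : ∀ p, 0 ≤ f p)
    (hle : ∀ p, f p ≤ C * (q ^ p.1 * q ^ p.2)) : Summable f :=
  Summable.of_nonneg_of_le h0 hle
    ((((summable_geometric_of_lt_one hq0.le hq1).mul_of_nonneg
      (summable_geometric_of_lt_one hq0.le hq1)
      (fun n => pow_nonneg hq0.le n) (fun n => pow_nonneg hq0.le n))).mul_left C)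

include hq0 hq1 in
lemma frac_le {E F : ℕ} (hEF : F ≤ E) {D : ℝ} (hD : 1 ≤ D) : q ^ E / D ≤ q ^ F := by
  calc q ^ E / D ≤ q ^ E := div_le_self (pow_nonneg hq0.le E) hD
    _ ≤ q ^ F := pow_le_pow_of_le_one hq0.le hq1.le hEF

include hq0 hq1 in
lemma Ufun_nonneg (n : ℕ) : 0 ≤ Ufun q n := by
  apply Finset.sum_nonneg
  intro i _
  have h1 : 1 - q ≤ 1 / qint q (i + 1) := sub_one_q_le_inv_qint hq0 hq1 (by omega)
  linarith

include hq0 hq1 in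
lemma Ufun_le (n : ℕ) : Ufun q n ≤ q / (1 - q) := by
  have h1 : ∀ i ∈ Finset.range n, 1 / qint q (i + 1) - (1 - q) ≤ q ^ (i + 1) := by
    intro i _
    have h2 : 1 / qint q (i + 1) - (1 - q) = q ^ (i + 1) / qint q (i + 1) :=
      one_div_qint_sub hq0 hq1 (by omega)
    have h3 : q ^ (i + 1) / qint q (i + 1) ≤ q ^ (i + 1) :=
      div_le_self (pow_nonneg hq0.le _) (one_le_qint hq0 hq1 (by omega))
    linarith
  calc Ufun q n ≤ ∑ i ∈ Finset.range n, q ^ (i + 1) := Finset.sum_le_sum h1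
    _ ≤ ∑' i : ℕ, q ^ (i + 1) := by
        apply Summable.sum_le_tsum
        · intro i _; exact pow_nonneg hq0.le _
        · exact summable_geo_succ hq0 hq1
    _ = q * ∑' i : ℕ, q ^ i := by
        rw [← tsum_mul_left]
        apply tsum_congr; intro i; rw [pow_succ]; ring
    _ = q * (1 - q)⁻¹ := by rw [tsum_geometric_of_lt_one hq0.le hq1]
    _ = q / (1 - q) := by rw [div_eq_mul_inv]

end telesec

noncomputable def antiE : (Σ c : ℕ, Fin (c + 1)) ≃ ℕ × ℕ := by
  apply Equiv.ofBijective (fun s => (s.1 - s.2.1, s.2.1))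
  constructor
  · rintro ⟨c, i, hi⟩ ⟨c', i', hi'⟩ h
    simp only [Prod.mk.injEq] at h
    obtain ⟨h1, h2⟩ := h
    have hc : c = c' := by omega
    subst hc
    congr
  · rintro ⟨a, b⟩
    exact ⟨⟨a + b, ⟨b, by omega⟩⟩, by simp⟩

lemma antiE_apply (c : ℕ) (i : Fin (c + 1)) : antiE ⟨c, i⟩ = (c - i.1, i.1) := rfl

/-- Depth-one q-zeta value ζ_q(k) = Σ_{m≥1} q^{(k-1)m}/[m]^k. -/
noncomputable def zetaQ (q : ℝ) (k : ℕ) : ℝ :=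
  ∑' m : ℕ, q ^ ((k - 1) * (m + 1)) / (qint q (m + 1)) ^ k

/-- Depth-two qMZV: sum over m₁ > m₂ ≥ 1, parametrized by m₂ = p.2+1, m₁ = p.2+p.1+2. -/
noncomputable def zetaQ2 (q : ℝ) (k₁ k₂ : ℕ) : ℝ :=
  ∑' p : ℕ × ℕ,
    q ^ ((k₁ - 1) * (p.2 + p.1 + 2) + (k₂ - 1) * (p.2 + 1)) /
      ((qint q (p.2 + p.1 + 2)) ^ k₁ * (qint q (p.2 + 1)) ^ k₂)

/-- Depth-two qMZSV: sum over m₁ ≥ m₂ ≥ 1, parametrized by m₂ = p.2+1, m₁ = p.2+p.1+1. -/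
noncomputable def zetaQStar2 (q : ℝ) (k₁ k₂ : ℕ) : ℝ :=
  ∑' p : ℕ × ℕ,
    q ^ ((k₁ - 1) * (p.2 + p.1 + 1) + (k₂ - 1) * (p.2 + 1)) /
      ((qint q (p.2 + p.1 + 1)) ^ k₁ * (qint q (p.2 + 1)) ^ k₂)

/-- Interpolated q-double zeta value. -/
noncomputable def zetaQT (q t : ℝ) (k₁ k₂ : ℕ) : ℝ :=
  zetaQ2 q k₁ k₂ + t * (zetaQ q (k₁ + k₂) + (1 - q) * zetaQ q (k₁ + k₂ - 1))

theorem stmt_9 (q : ℝ) (hq0 : 0 < q) (hq1 : q < 1) (k : ℕ) (hk : 2 ≤ k) :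
    ∑ j ∈ Finset.range (k - 1), zetaQStar2 q (k - j) (j + 1) =
      (k : ℝ) * zetaQ q (k + 1) + ((k : ℝ) - 1) * (1 - q) * zetaQ q k := by
  classical
  -- basic facts
  have hq1' : (0:ℝ) < 1 - q := by linarith
  have hQpos : ∀ {m : ℕ}, 1 ≤ m → 0 < qint q m := fun hm => qint_pos hq0 hq1 hm
  have hQ1 : ∀ {m : ℕ}, 1 ≤ m → 1 ≤ qint q m := fun hm => one_le_qint hq0 hq1 hm
  -- the summand family
  set f : ℕ → ℕ × ℕ → ℝ := fun j p =>
    q ^ ((k - j - 1) * (p.2 + p.1 + 1) + j * (p.2 + 1)) /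
      (qint q (p.2 + p.1 + 1) ^ (k - j) * qint q (p.2 + 1) ^ (j + 1)) with hfdef
  have hfnn : ∀ j p, 0 ≤ f j p := by
    intro j p
    apply div_nonneg (pow_nonneg hq0.le _)
    exact mul_nonneg (pow_nonneg (qint_nonneg hq0 hq1 _) _)
      (pow_nonneg (qint_nonneg hq0 hq1 _) _)
  have hDge1 : ∀ (m m' e e' : ℕ), 1 ≤ m → 1 ≤ m' →
      1 ≤ qint q m ^ e * qint q m' ^ e' := by
    intro m m' e e' hm hm'
    exact one_le_mul_of_one_le_of_one_le (one_le_pow₀ (hQ1 hm)) (one_le_pow₀ (hQ1 hm'))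
  have hfs : ∀ j ∈ Finset.range (k - 1), Summable (f j) := by
    intro j hj
    rw [Finset.mem_range] at hj
    apply summable_bound2 hq0 hq1 q (fun p => hfnn j p)
    intro p
    have hE : p.1 + p.2 + 1 ≤ (k - j - 1) * (p.2 + p.1 + 1) + j * (p.2 + 1) := by
      have h1 : p.2 + p.1 + 1 ≤ (k - j - 1) * (p.2 + p.1 + 1) :=
        Nat.le_mul_of_pos_left _ (by omega)
      omega
    calc f j p ≤ q ^ (p.1 + p.2 + 1) :=
          frac_le hq0 hq1 hE (hDge1 _ _ _ _ (by omega) (by omega))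
      _ = q * (q ^ p.1 * q ^ p.2) := by rw [pow_add, pow_add, pow_one]; ring
  -- rewrite LHS as a single tsum
  have hzeta : ∀ j ∈ Finset.range (k - 1), zetaQStar2 q (k - j) (j + 1) = ∑' p, f j p := by
    intro j hj
    rw [zetaQStar2]
    apply tsum_congr
    intro p
    simp only [hfdef, Nat.add_sub_cancel]
  set G : ℕ × ℕ → ℝ := fun p => ∑ j ∈ Finset.range (k - 1), f j p with hGdef
  have hGnn : ∀ p, 0 ≤ G p := fun p => Finset.sum_nonneg fun j _ => hfnn j p
  have hG : Summable G := summable_sum hfs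
  have step1 : ∑ j ∈ Finset.range (k - 1), zetaQStar2 q (k - j) (j + 1) = ∑' p, G p := by
    rw [Finset.sum_congr rfl hzeta, ← Summable.tsum_finsetSum hfs]
  -- split into diagonal and strict parts
  set Gd : ℕ × ℕ → ℝ := fun p => if p.1 = 0 then G p else 0 with hGddef
  set Gs : ℕ × ℕ → ℝ := fun p => if p.1 = 0 then 0 else G p with hGsdef
  have hGd : Summable Gd := by
    apply Summable.of_nonneg_of_le _ _ hG
    · intro p; rw [hGddef]; dsimp only; split <;> simp [hGnn p]
    · intro p; rw [hGddef]; dsimp only; split <;> simp [hGnn p]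
  have hGs : Summable Gs := by
    apply Summable.of_nonneg_of_le _ _ hG
    · intro p; rw [hGsdef]; dsimp only; split <;> simp [hGnn p]
    · intro p; rw [hGsdef]; dsimp only; split <;> simp [hGnn p]
  have hsplit : ∑' p, G p = (∑' p, Gd p) + ∑' p, Gs p := by
    rw [← Summable.tsum_add hGd hGs]
    apply tsum_congr
    intro p
    rw [hGddef, hGsdef]
    dsimp only
    split <;> ring
  -- diagonal part
  have hdiagterm : ∀ b : ℕ, G (0, b) =
      ((k:ℝ) - 1) * (q ^ ((k - 1) * (b + 1)) / qint q (b + 1) ^ (k + 1)) := by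
    intro b
    have h : G (0, b) = ∑ j ∈ Finset.range (k - 1),
        q ^ ((k - j - 1) * (b + 1) + j * (b + 1)) /
          (qint q (b + 1) ^ (k - j) * qint q (b + 1) ^ (j + 1)) := by
      rw [hGdef]
      apply Finset.sum_congr rfl
      intro j hj
      simp only [hfdef]
    rw [h]
    exact diag_lemma hk (b + 1)
  have hsummgen : ∀ (c e : ℕ), 1 ≤ c →
      Summable (fun b : ℕ => q ^ (c * (b + 1)) / qint q (b + 1) ^ e) := by
    intro c e hc
    apply summable_bound hq0 hq1 q
    · intro b
      exact div_nonneg (pow_nonneg hq0.le _) (pow_nonneg (qint_nonneg hq0 hq1 _) _)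
    · intro b
      calc q ^ (c * (b + 1)) / qint q (b + 1) ^ e ≤ q ^ (b + 1) :=
            frac_le hq0 hq1 (Nat.le_mul_of_pos_left _ (by omega))
              (one_le_pow₀ (hQ1 (by omega)))
        _ = q * q ^ b := by rw [pow_succ]; ring
  have hkk : (k - 1) + 1 = k := by omega
  have hterm_split : ∀ b : ℕ, q ^ ((k - 1) * (b + 1)) / qint q (b + 1) ^ (k + 1) =
      q ^ (k * (b + 1)) / qint q (b + 1) ^ (k + 1) +
        (1 - q) * (q ^ ((k - 1) * (b + 1)) / qint q (b + 1) ^ k) := by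
    intro b
    have hQp : 0 < qint q (b + 1) := hQpos (by omega)
    have hone : q ^ (b + 1) + (1 - q) * qint q (b + 1) = 1 := by
      have := qint_mul hq1 (b + 1); linarith
    have hk1 : k * (b + 1) = (k - 1) * (b + 1) + (b + 1) := by
      calc k * (b + 1) = ((k - 1) + 1) * (b + 1) := by rw [hkk]
        _ = (k - 1) * (b + 1) + (b + 1) := by ring
    have hQne : qint q (b + 1) ≠ 0 := ne_of_gt hQp
    have hQkne : qint q (b + 1) ^ k ≠ 0 := pow_ne_zero _ hQne
    have h2 : q ^ (k * (b + 1)) = q ^ ((k - 1) * (b + 1)) * q ^ (b + 1) := by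
      rw [hk1, pow_add]
    have hqE : (1:ℝ) - q ^ (b + 1) = (1 - q) * qint q (b + 1) := by linarith
    rw [h2, pow_succ]
    have key : (1 - q) * (q ^ ((k - 1) * (b + 1)) / qint q (b + 1) ^ k) =
        q ^ ((k - 1) * (b + 1)) * (1 - q ^ (b + 1)) /
          (qint q (b + 1) ^ k * qint q (b + 1)) := by
      rw [hqE, show q ^ ((k - 1) * (b + 1)) * ((1 - q) * qint q (b + 1)) =
            (q ^ ((k - 1) * (b + 1)) * (1 - q)) * qint q (b + 1) from by ring,
          mul_div_mul_right _ _ hQne]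
      ring
    rw [key, ← add_div]
    congr 1
    ring
  have hdiag : ∑' p, Gd p = ((k:ℝ) - 1) * (zetaQ q (k + 1) + (1 - q) * zetaQ q k) := by
    rw [Summable.tsum_prod hGd, tsum_eq_single 0 (by
      intro a ha
      have h0 : ∀ b : ℕ, Gd (a, b) = 0 := by
        intro b; rw [hGddef]; exact if_neg ha
      rw [tsum_congr h0, tsum_zero])]
    have hstep2 : ∑' b : ℕ, Gd (0, b) =
        ((k:ℝ) - 1) * ∑' b : ℕ, (q ^ (k * (b + 1)) / qint q (b + 1) ^ (k + 1) +
          (1 - q) * (q ^ ((k - 1) * (b + 1)) / qint q (b + 1) ^ k)) := by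
      rw [← tsum_mul_left]
      apply tsum_congr
      intro b
      have h1 : Gd (0, b) = G (0, b) := by simp [hGddef]
      rw [h1, hdiagterm b, ← hterm_split b]
    rw [hstep2, Summable.tsum_add (hsummgen k (k + 1) (by omega))
      (((hsummgen (k - 1) k (by omega))).mul_left (1 - q)), tsum_mul_left]
    have hz1 : zetaQ q (k + 1) = ∑' b : ℕ, q ^ (k * (b + 1)) / qint q (b + 1) ^ (k + 1) := by
      rw [zetaQ]; simp only [Nat.add_sub_cancel]
    have hz2 : zetaQ q k = ∑' b : ℕ, q ^ ((k - 1) * (b + 1)) / qint q (b + 1) ^ k := by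
      rw [zetaQ]
    rw [hz1, hz2]

  -- strict part
  set A : ℕ → ℕ → ℝ := fun x y =>
    q ^ ((k - 1) * (x + 1)) / qint q (x + 1) ^ k *
      (1 / qint q (y + 1) - 1 / qint q (x + 1 + (y + 1))) with hAdef
  set B : ℕ → ℕ → ℝ := fun x y =>
    q ^ ((k - 1) * (x + 1 + (y + 1)) + (y + 1)) /
      (qint q (x + 1 + (y + 1)) ^ k * qint q (y + 1)) with hBdef
  have hGstrict : ∀ x y : ℕ, Gs (y + 1, x) = A x y - B x y := by
    intro x y
    have h1 : Gs (y + 1, x) = G (y + 1, x) := by simp [hGsdef]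
    rw [h1, hGdef]
    dsimp only
    have h2 : ∀ j ∈ Finset.range (k - 1), f j (y + 1, x) =
        q ^ ((k - j - 1) * (x + 1 + (y + 1)) + j * (x + 1)) /
          (qint q (x + 1 + (y + 1)) ^ (k - j) * qint q (x + 1) ^ (j + 1)) := by
      intro j hj
      simp only [hfdef]
      rw [show x + (y + 1) + 1 = x + 1 + (y + 1) from by omega]
    rw [Finset.sum_congr rfl h2,
      pair_lemma hq0 hq1 hk (x + 1) (y + 1) (by omega) (by omega)]
  have hAsum : ∀ x : ℕ, HasSum (A x)
      (q ^ ((k - 1) * (x + 1)) / qint q (x + 1) ^ k * Ufun q (x + 1)) := by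
    intro x
    exact (tele hq0 hq1 (x + 1)).mul_left _
  have hBnn : ∀ x y : ℕ, 0 ≤ B x y := by
    intro x y
    rw [hBdef]
    exact div_nonneg (pow_nonneg hq0.le _)
      (mul_nonneg (pow_nonneg (qint_nonneg hq0 hq1 _) _) (qint_nonneg hq0 hq1 _))
  have hBB : Summable (fun p : ℕ × ℕ => B p.1 p.2) := by
    apply summable_bound2 hq0 hq1 1
    · intro p; exact hBnn p.1 p.2
    · intro p
      have hD : 1 ≤ qint q (p.1 + 1 + (p.2 + 1)) ^ k * qint q (p.2 + 1) ^ 1 :=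
        hDge1 _ _ _ _ (by omega) (by omega)
      rw [pow_one] at hD
      have hE : p.1 + p.2 ≤ (k - 1) * (p.1 + 1 + (p.2 + 1)) + (p.2 + 1) := by
        have h1 : p.1 + 1 + (p.2 + 1) ≤ (k - 1) * (p.1 + 1 + (p.2 + 1)) :=
          Nat.le_mul_of_pos_left _ (by omega)
        omega
      have hle : B p.1 p.2 ≤ q ^ (p.1 + p.2) := by
        rw [hBdef]; exact frac_le hq0 hq1 hE hD
      calc B p.1 p.2 ≤ q ^ (p.1 + p.2) := hle
        _ = 1 * (q ^ p.1 * q ^ p.2) := by rw [pow_add]; ring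
  have hBsl : ∀ x : ℕ, Summable (fun y => B x y) := fun x => hBB.prod_factor x
  have hW : Summable (fun x : ℕ => ∑' y, B x y) := hBB.prod
  have hTnn : ∀ x : ℕ, 0 ≤ q ^ ((k - 1) * (x + 1)) / qint q (x + 1) ^ k :=
    fun x => div_nonneg (pow_nonneg hq0.le _) (pow_nonneg (qint_nonneg hq0 hq1 _) _)
  have hTle : ∀ x : ℕ, q ^ ((k - 1) * (x + 1)) / qint q (x + 1) ^ k ≤ q ^ (x + 1) :=
    fun x => frac_le hq0 hq1 (Nat.le_mul_of_pos_left _ (by omega))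
      (one_le_pow₀ (hQ1 (by omega)))
  have hT : Summable (fun x : ℕ =>
      q ^ ((k - 1) * (x + 1)) / qint q (x + 1) ^ k * Ufun q (x + 1)) := by
    apply summable_bound hq0 hq1 (q * (q / (1 - q)))
    · intro x; exact mul_nonneg (hTnn x) (Ufun_nonneg hq0 hq1 _)
    · intro x
      calc q ^ ((k - 1) * (x + 1)) / qint q (x + 1) ^ k * Ufun q (x + 1)
          ≤ q ^ (x + 1) * (q / (1 - q)) :=
            mul_le_mul (hTle x) (Ufun_le hq0 hq1 _) (Ufun_nonneg hq0 hq1 _)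
              (pow_nonneg hq0.le _)
        _ = q * (q / (1 - q)) * q ^ x := by rw [pow_succ]; ring
  have hv : Summable (fun x : ℕ =>
      q ^ ((k - 1) * (x + 1)) / qint q (x + 1) ^ k * Ufun q x) := by
    apply summable_bound hq0 hq1 (q * (q / (1 - q)))
    · intro x; exact mul_nonneg (hTnn x) (Ufun_nonneg hq0 hq1 _)
    · intro x
      calc q ^ ((k - 1) * (x + 1)) / qint q (x + 1) ^ k * Ufun q x
          ≤ q ^ (x + 1) * (q / (1 - q)) :=
            mul_le_mul (hTle x) (Ufun_le hq0 hq1 _) (Ufun_nonneg hq0 hq1 _)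
              (pow_nonneg hq0.le _)
        _ = q * (q / (1 - q)) * q ^ x := by rw [pow_succ]; ring
  have hinner : ∀ x : ℕ, (∑' y, Gs (y, x)) =
      q ^ ((k - 1) * (x + 1)) / qint q (x + 1) ^ k * Ufun q (x + 1) - ∑' y, B x y := by
    intro x
    have hsummable : Summable (fun y => Gs (y, x)) := hGs.prod_symm.prod_factor x
    rw [Summable.tsum_eq_zero_add hsummable]
    have h0 : Gs (0, x) = 0 := by simp [hGsdef]
    rw [h0, zero_add, tsum_congr (fun y => hGstrict x y),
      Summable.tsum_sub (hAsum x).summable (hBsl x), (hAsum x).tsum_eq]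
  have hterm : ∀ c : ℕ, ∀ i ∈ Finset.range (c + 1), B (c - i) i =
      q ^ ((k - 1) * (c + 1 + 1)) / qint q (c + 1 + 1) ^ k *
        (1 / qint q (i + 1) - (1 - q)) := by
    intro c i hi
    rw [Finset.mem_range] at hi
    have harg : c - i + 1 + (i + 1) = c + 1 + 1 := by omega
    rw [hBdef]
    dsimp only
    rw [harg, pow_add, mul_div_mul_comm, ← one_div_qint_sub hq0 hq1 (show 1 ≤ i + 1 by omega)]
  have hreg : ∑' x, ∑' y, B x y =
      ∑' c : ℕ, q ^ ((k - 1) * (c + 1 + 1)) / qint q (c + 1 + 1) ^ k * Ufun q (c + 1) := by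
    calc ∑' x, ∑' y, B x y
        = ∑' p : ℕ × ℕ, B p.1 p.2 := (Summable.tsum_prod hBB).symm
      _ = ∑' s : Σ c : ℕ, Fin (c + 1), B ((antiE s).1) ((antiE s).2) :=
          (antiE.tsum_eq (fun p : ℕ × ℕ => B p.1 p.2)).symm
      _ = ∑' c : ℕ, ∑' i : Fin (c + 1), B (c - (i : ℕ)) (i : ℕ) :=
          Summable.tsum_sigma (antiE.summable_iff.mpr hBB)
      _ = ∑' c : ℕ, ∑ i ∈ Finset.range (c + 1), B (c - i) i := by
          apply tsum_congr; intro c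
          rw [tsum_fintype]
          exact Fin.sum_univ_eq_sum_range (fun i => B (c - i) i) (c + 1)
      _ = ∑' c : ℕ, q ^ ((k - 1) * (c + 1 + 1)) / qint q (c + 1 + 1) ^ k * Ufun q (c + 1) := by
          apply tsum_congr; intro c
          rw [Finset.sum_congr rfl (hterm c), ← Finset.mul_sum, ← Ufun]
  have hstrict : ∑' p, Gs p = zetaQ q (k + 1) := by
    have hswap : ∑' p, Gs p = ∑' p : ℕ × ℕ, Gs (p.2, p.1) :=
      ((Equiv.prodComm ℕ ℕ).tsum_eq Gs).symm
    have hsymm : Summable (fun p : ℕ × ℕ => Gs (p.2, p.1)) := hGs.prod_symm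
    have h2nd : ∑' c : ℕ, q ^ ((k - 1) * (c + 1 + 1)) / qint q (c + 1 + 1) ^ k * Ufun q (c + 1) =
        ∑' x, q ^ ((k - 1) * (x + 1)) / qint q (x + 1) ^ k * Ufun q x := by
      rw [Summable.tsum_eq_zero_add hv]
      have hv0 : q ^ ((k - 1) * (0 + 1)) / qint q (0 + 1) ^ k * Ufun q 0 = 0 := by
        simp [Ufun]
      rw [hv0, zero_add]
    calc ∑' p, Gs p
        = ∑' p : ℕ × ℕ, Gs (p.2, p.1) := hswap
      _ = ∑' x, ∑' y, Gs (y, x) := Summable.tsum_prod hsymm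
      _ = ∑' x, (q ^ ((k - 1) * (x + 1)) / qint q (x + 1) ^ k * Ufun q (x + 1)
            - ∑' y, B x y) := tsum_congr hinner
      _ = (∑' x, q ^ ((k - 1) * (x + 1)) / qint q (x + 1) ^ k * Ufun q (x + 1))
            - ∑' x, ∑' y, B x y := Summable.tsum_sub hT hW
      _ = (∑' x, q ^ ((k - 1) * (x + 1)) / qint q (x + 1) ^ k * Ufun q (x + 1))
            - ∑' x, q ^ ((k - 1) * (x + 1)) / qint q (x + 1) ^ k * Ufun q x := by
          rw [hreg, h2nd]
      _ = ∑' x, (q ^ ((k - 1) * (x + 1)) / qint q (x + 1) ^ k * Ufun q (x + 1)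
            - q ^ ((k - 1) * (x + 1)) / qint q (x + 1) ^ k * Ufun q x) :=
          (Summable.tsum_sub hT hv).symm
      _ = zetaQ q (k + 1) := by
          rw [zetaQ]
          apply tsum_congr
          intro x
          simp only [Nat.add_sub_cancel]
          have hu : Ufun q (x + 1) - Ufun q x = 1 / qint q (x + 1) - (1 - q) := by
            rw [Ufun, Ufun, Finset.sum_range_succ]; ring
          have hid : 1 / qint q (x + 1) - (1 - q) = q ^ (x + 1) / qint q (x + 1) :=
            one_div_qint_sub hq0 hq1 (by omega)
          have hkx : k * (x + 1) = (k - 1) * (x + 1) + (x + 1) := by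
            calc k * (x + 1) = ((k - 1) + 1) * (x + 1) := by rw [hkk]
              _ = (k - 1) * (x + 1) + (x + 1) := by ring
          calc q ^ ((k - 1) * (x + 1)) / qint q (x + 1) ^ k * Ufun q (x + 1)
                - q ^ ((k - 1) * (x + 1)) / qint q (x + 1) ^ k * Ufun q x
              = q ^ ((k - 1) * (x + 1)) / qint q (x + 1) ^ k *
                  (Ufun q (x + 1) - Ufun q x) := by ring
            _ = q ^ ((k - 1) * (x + 1)) / qint q (x + 1) ^ k *
                  (q ^ (x + 1) / qint q (x + 1)) := by rw [hu, hid]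
            _ = q ^ (k * (x + 1)) / qint q (x + 1) ^ (k + 1) := by
                rw [div_mul_div_comm, ← pow_add, ← hkx, ← pow_succ]
  rw [step1, hsplit, hdiag, hstrict]
  ring
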